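/- Let λ, μ, λ̃, μ̃ be real numbers with μ > 0, 3λ + 2μ > 0, μ̃ > 0 and 3λ̃ + 2μ̃ > 0, and let r > 0 be a real number. Define the polynomial p : ℂ → ℂ by p(t) = (μ + μ̃)·r + 2i·(μ²/(λ+3μ) − μ̃²/(λ̃+3μ̃))·t − ((λ+μ)μ/(λ+3μ) + (λ̃+μ̃)μ̃/(λ̃+3μ̃))·r⁻¹·t². Then p(0) ≠ 0, p(i·r) ≠ 0, and p(−i·r) ≠ 0. -/

import Mathlib

/-- Nonvanishing of the eigenvalues of the principal symbol of
`Λ^{λ̃,μ̃,i} − Λ^{λ,μ,e}` (Remark after Proposition 2.10): under admissibility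
of both Lamé pairs in dimension 3, the polynomial `p` is nonzero at `0` and at
`± i r`. -/
theorem principal_symbol_eigenvalues_nonzero
    (lam mu lam' mu' r : ℝ)
    (hmu : 0 < mu) (hadm : 0 < 3 * lam + 2 * mu)
    (hmu' : 0 < mu') (hadm' : 0 < 3 * lam' + 2 * mu')
    (hr : 0 < r)
    (p : ℂ → ℂ)
    (hp : ∀ t : ℂ, p t =
      (((mu + mu') * r : ℝ) : ℂ)
        + 2 * Complex.I *
            ((mu ^ 2 / (lam + 3 * mu) - mu' ^ 2 / (lam' + 3 * mu') : ℝ) : ℂ) * t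
        - (((lam + mu) * mu / (lam + 3 * mu)
              + (lam' + mu') * mu' / (lam' + 3 * mu') : ℝ) : ℂ)
            * ((r⁻¹ : ℝ) : ℂ) * t ^ 2) :
    p 0 ≠ 0 ∧ p (Complex.I * (r : ℂ)) ≠ 0 ∧ p (-(Complex.I * (r : ℂ))) ≠ 0 := by
  have hd : 0 < lam + 3 * mu := by linarith
  have hd' : 0 < lam' + 3 * mu' := by linarith
  have hlm : 0 < lam + mu := by linarith
  have hlm' : 0 < lam' + mu' := by linarith
  have hrne : r ≠ 0 := hr.ne'
  have hdne : lam + 3 * mu ≠ 0 := hd.ne'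
  have hdne' : lam' + 3 * mu' ≠ 0 := hd'.ne'
  set A : ℝ := mu ^ 2 / (lam + 3 * mu) - mu' ^ 2 / (lam' + 3 * mu') with hA
  set B : ℝ := (lam + mu) * mu / (lam + 3 * mu) + (lam' + mu') * mu' / (lam' + 3 * mu')
    with hB
  refine ⟨?_, ?_, ?_⟩
  · rw [hp 0]
    have h0 : ((mu + mu') * r : ℝ) ≠ 0 := by positivity
    simpa using (Complex.ofReal_ne_zero.mpr h0)
  · have h1 : p (Complex.I * (r : ℂ)) =
        (((mu + mu') * r - 2 * A * r + B * r⁻¹ * r ^ 2 : ℝ) : ℂ) := by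
      rw [hp]
      push_cast
      linear_combination (2 * (A : ℂ) * (r : ℂ)
        - (B : ℂ) * ((r : ℂ))⁻¹ * (r : ℂ) ^ 2) * Complex.I_sq
    rw [h1]
    have hval : (mu + mu') * r - 2 * A * r + B * r⁻¹ * r ^ 2
        = r * (2 * mu * (lam + mu) / (lam + 3 * mu) + 2 * mu') := by
      rw [hA, hB]; field_simp; linear_combination (-mu) * mul_inv_cancel₀ hdne + mu' * mul_inv_cancel₀ hdne'
    have hpos : (0 : ℝ) < r * (2 * mu * (lam + mu) / (lam + 3 * mu) + 2 * mu') := by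
      positivity
    rw [hval]
    exact Complex.ofReal_ne_zero.mpr hpos.ne'
  · have h2 : p (-(Complex.I * (r : ℂ))) =
        (((mu + mu') * r + 2 * A * r + B * r⁻¹ * r ^ 2 : ℝ) : ℂ) := by
      rw [hp]
      push_cast
      linear_combination (-(2 * (A : ℂ) * (r : ℂ))
        - (B : ℂ) * ((r : ℂ))⁻¹ * (r : ℂ) ^ 2) * Complex.I_sq
    rw [h2]
    have hval : (mu + mu') * r + 2 * A * r + B * r⁻¹ * r ^ 2
        = r * (2 * mu + 2 * mu' * (lam' + mu') / (lam' + 3 * mu')) := by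
      rw [hA, hB]; field_simp; linear_combination mu * mul_inv_cancel₀ hdne - mu' * mul_inv_cancel₀ hdne'
    have hpos : (0 : ℝ) < r * (2 * mu + 2 * mu' * (lam' + mu') / (lam' + 3 * mu')) := by
      positivity
    rw [hval]
    exact Complex.ofReal_ne_zero.mpr hpos.ne'
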